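/- For every scoring matrix γ: dist_γ(s,u) ≤ dist_γ(s,t) + dist_γ(t,u) for all s,t,u ∈ Σ* if and only if, for all a,b,c ∈ Σ: (i) γ(a,‐) ≤ γ(a,b) + γ(b,‐); (ii) γ(‐,a) ≤ γ(‐,b) + γ(b,a); (iii) min{γ(a,c), γ(a,‐)+γ(‐,c)} ≤ γ(a,b)+γ(b,c); and (iv) γ(b,‐) + γ(‐,b) ≥ 0. -/

import Mathlib

open List

/-- A scoring matrix on alphabet `σ`; `none` represents the space symbol `‐`.
The value at `(none, none)` is irrelevant (never used on admissible columns). -/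
abbrev Scoring (σ : Type*) := Option σ → Option σ → ℝ

/-- `A` is an alignment of the sequences `s` and `t`: a list of columns over
`Σ₋ × Σ₋` with no column `(‐,‐)`, whose first (resp. second) components with
spaces removed spell `s` (resp. `t`). -/
def IsAlignment {σ : Type*} (A : List (Option σ × Option σ)) (s t : List σ) : Prop :=
  (∀ c ∈ A, c ≠ ((none : Option σ), (none : Option σ))) ∧
  A.filterMap Prod.fst = s ∧ A.filterMap Prod.snd = t

/-- The score of an alignment: the sum of `γ` over its columns. -/
def alignScore {σ : Type*} (γ : Scoring σ) (A : List (Option σ × Option σ)) : ℝ :=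
  (A.map fun c => γ c.1 c.2).sum

/-- The weighted edit distance: minimum alignment score. -/
noncomputable def editDist {σ : Type*} (γ : Scoring σ) (s t : List σ) : ℝ :=
  sInf {x | ∃ A, IsAlignment A s t ∧ alignScore γ A = x}

/-- The normalized edit distance: minimum normalized alignment score
(score divided by number of columns); for `s = t = ε` it is `0`. -/
noncomputable def ndist {σ : Type*} (γ : Scoring σ) (s t : List σ) : ℝ :=
  sInf {x | ∃ A, IsAlignment A s t ∧ alignScore γ A / (A.length : ℝ) = x}

/-- A walk in the digraph `D(γ)`: a list of vertices of `Σ₋` in which the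
space `‐` never follows the space. -/
def IsWalkSeq {σ : Type*} (W : List (Option σ)) : Prop :=
  W.Chain' (fun a b => ¬(a = none ∧ b = none))

/-- The weight of a walk: the sum of the weights of its consecutive arcs. -/
def walkWeight {σ : Type*} (γ : Scoring σ) (W : List (Option σ)) : ℝ :=
  ((W.zip W.tail).map fun p => γ p.1 p.2).sum

/-- `D(γ)` has a cycle of negative total weight (cycles start and end at a
vertex of `Σ`). -/
def HasNegCycle {σ : Type*} (γ : Scoring σ) : Prop :=
  ∃ (a : σ) (W : List (Option σ)),
    IsWalkSeq (some a :: (W ++ [some a])) ∧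
    walkWeight γ (some a :: (W ++ [some a])) < 0

/-- The shortest-walk distance from `x` to `y` in `D(γ)`. -/
noncomputable def walkDist {σ : Type*} (γ : Scoring σ) (x y : Option σ) : ℝ :=
  sInf {w | ∃ W : List (Option σ), IsWalkSeq W ∧ W.head? = some x ∧
    W.getLast? = some y ∧ walkWeight γ W = w}

/-- A column of an extended alignment: a nonempty sequence over `Σ₋`, with at
least one non-space symbol, no two consecutive spaces, and not having a space
at both ends. -/
def IsExtCol {σ : Type*} (c : List (Option σ)) : Prop :=
  c ≠ [] ∧ (∃ x ∈ c, x ≠ none) ∧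
  c.Chain' (fun a b => ¬(a = none ∧ b = none)) ∧
  ¬(c.head? = some none ∧ c.getLast? = some none)

/-- An extended alignment of `s, t`: a list of admissible columns whose first
symbols (spaces removed) spell `s` and whose last symbols spell `t`. -/
def IsExtAlignment {σ : Type*} (E : List (List (Option σ))) (s t : List σ) : Prop :=
  (∀ c ∈ E, IsExtCol c) ∧
  E.filterMap (fun c => c.head?.bind id) = s ∧
  E.filterMap (fun c => c.getLast?.bind id) = t

/-- The extended edit distance: minimum total score over extended alignments,
where the score of a column is the sum of `γ` over its consecutive pairs. -/
noncomputable def edist {σ : Type*} (γ : Scoring σ) (s t : List σ) : ℝ :=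
  sInf {x | ∃ E, IsExtAlignment E s t ∧ (E.map (walkWeight γ)).sum = x}

/-- `f` is a premetric: `f x x = 0` and `f x y ≥ 0`. -/
def IsPremetric {σ : Type*} (f : List σ → List σ → ℝ) : Prop :=
  (∀ s, f s s = 0) ∧ (∀ s t, 0 ≤ f s t)

section Aux
variable {σ : Type*}

lemma alignScore_cons (γ : Scoring σ) (c : Option σ × Option σ) (A : List (Option σ × Option σ)) :
    alignScore γ (c :: A) = γ c.1 c.2 + alignScore γ A := by
  simp [alignScore]

lemma alignScore_append (γ : Scoring σ) (A B : List (Option σ × Option σ)) :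
    alignScore γ (A ++ B) = alignScore γ A + alignScore γ B := by
  simp [alignScore]

lemma exists_alignment (s t : List σ) :
    IsAlignment (s.map (fun a => ((some a : Option σ), (none : Option σ))) ++
      t.map (fun b => ((none : Option σ), (some b : Option σ)))) s t := by
  refine ⟨?_, ?_, ?_⟩
  · intro c hc
    rcases List.mem_append.1 hc with h | h <;> rcases List.mem_map.1 h with ⟨x, _, rfl⟩ <;> simp
  · simp [List.filterMap_append, List.filterMap_map, Function.comp_def]
  · simp [List.filterMap_append, List.filterMap_map, Function.comp_def]

lemma alignment_length_le {A : List (Option σ × Option σ)} {s t : List σ}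
    (h : IsAlignment A s t) : A.length ≤ s.length + t.length := by
  obtain ⟨h0, hs, ht⟩ := h
  subst hs; subst ht
  induction A with
  | nil => simp
  | cons c A ih =>
    have hc := h0 c List.mem_cons_self
    have h0' : ∀ c ∈ A, c ≠ ((none : Option σ), (none : Option σ)) :=
      fun d hd => h0 d (List.mem_cons_of_mem _ hd)
    rcases c with ⟨x, y⟩
    cases x with
    | none =>
      cases y with
      | none => exact absurd rfl hc
      | some b => simp only [List.filterMap_cons, List.length_cons, List.length]
                  have := ih h0'; omega
    | some a =>
      cases y with
      | none => simp only [List.filterMap_cons, List.length_cons, List.length]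
                have := ih h0'; omega
      | some b => simp only [List.filterMap_cons, List.length_cons, List.length]
                  have := ih h0'; omega

lemma scores_nonempty (γ : Scoring σ) (s t : List σ) :
    {x | ∃ A, IsAlignment A s t ∧ alignScore γ A = x}.Nonempty :=
  ⟨_, _, exists_alignment s t, rfl⟩

lemma scores_bddBelow [Fintype σ] (γ : Scoring σ) (s t : List σ) :
    BddBelow {x | ∃ A, IsAlignment A s t ∧ alignScore γ A = x} := by
  classical
  set m : ℝ := min ((Finset.univ : Finset (Option σ × Option σ)).inf'
      ⟨(none, none), Finset.mem_univ _⟩ (fun p => γ p.1 p.2)) 0 with hm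
  have hm0 : m ≤ 0 := min_le_right _ _
  have hmle : ∀ p : Option σ × Option σ, m ≤ γ p.1 p.2 := fun p =>
    le_trans (min_le_left _ _) (Finset.inf'_le _ (Finset.mem_univ p))
  refine ⟨(s.length + t.length : ℕ) • m, ?_⟩
  rintro x ⟨A, hA, rfl⟩
  calc ((s.length + t.length : ℕ) : ℕ) • m ≤ A.length • m := by
        have := alignment_length_le hA
        have : (A.length : ℝ) * m ≥ ((s.length + t.length : ℕ) : ℝ) * m := by
          apply mul_le_mul_of_nonpos_right _ hm0
          exact_mod_cast alignment_length_le hA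
        simpa [nsmul_eq_mul] using this
    _ ≤ alignScore γ A := by
        have : (A.map fun c => γ c.1 c.2).length • m ≤ (A.map fun c => γ c.1 c.2).sum :=
          List.card_nsmul_le_sum _ _ (by rintro x hx; rcases List.mem_map.1 hx with ⟨c, _, rfl⟩; exact hmle c)
        simpa [alignScore] using this

lemma editDist_le [Fintype σ] (γ : Scoring σ) {A : List (Option σ × Option σ)} {s t : List σ}
    (h : IsAlignment A s t) : editDist γ s t ≤ alignScore γ A :=
  csInf_le (scores_bddBelow γ s t) ⟨A, h, rfl⟩

lemma le_editDist (γ : Scoring σ) {s t : List σ} {c : ℝ}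
    (h : ∀ A, IsAlignment A s t → c ≤ alignScore γ A) : c ≤ editDist γ s t :=
  le_csInf (scores_nonempty γ s t) (by rintro x ⟨A, hA, rfl⟩; exact h A hA)

end Aux

section Small
variable {σ : Type*}

lemma align_nil_nil {A : List (Option σ × Option σ)} (h : IsAlignment A [] []) : A = [] := by
  obtain ⟨h0, hs, ht⟩ := h
  cases A with
  | nil => rfl
  | cons c A =>
    rcases c with ⟨x, y⟩
    cases x with
    | some a => simp [List.filterMap_cons] at hs
    | none => cases y with
      | some b => simp [List.filterMap_cons] at ht
      | none => exact absurd rfl (h0 _ List.mem_cons_self)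

lemma align_single_nil {A : List (Option σ × Option σ)} {a : σ}
    (h : IsAlignment A [a] []) : A = [((some a : Option σ), (none : Option σ))] := by
  obtain ⟨h0, hs, ht⟩ := h
  cases A with
  | nil => simp at hs
  | cons c A =>
    rcases c with ⟨x, y⟩
    cases y with
    | some b => simp [List.filterMap_cons] at ht
    | none =>
      cases x with
      | none => exact absurd rfl (h0 _ List.mem_cons_self)
      | some a' =>
        simp only [List.filterMap_cons] at hs ht
        obtain ⟨rfl, hs2⟩ := List.cons_eq_cons.1 hs
        have : A = [] := align_nil_nil ⟨fun d hd => h0 d (List.mem_cons_of_mem _ hd), hs2, ht⟩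
        simp [this]

lemma align_nil_single {A : List (Option σ × Option σ)} {a : σ}
    (h : IsAlignment A [] [a]) : A = [((none : Option σ), (some a : Option σ))] := by
  obtain ⟨h0, hs, ht⟩ := h
  cases A with
  | nil => simp at ht
  | cons c A =>
    rcases c with ⟨x, y⟩
    cases x with
    | some b => simp [List.filterMap_cons] at hs
    | none =>
      cases y with
      | none => exact absurd rfl (h0 _ List.mem_cons_self)
      | some a' =>
        simp only [List.filterMap_cons] at hs ht
        obtain ⟨rfl, ht2⟩ := List.cons_eq_cons.1 ht
        have : A = [] := align_nil_nil ⟨fun d hd => h0 d (List.mem_cons_of_mem _ hd), hs, ht2⟩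
        simp [this]

lemma align_single_single {A : List (Option σ × Option σ)} {a c : σ}
    (h : IsAlignment A [a] [c]) :
    A = [((some a : Option σ), (some c : Option σ))] ∨
    A = [(some a, none), (none, some c)] ∨ A = [(none, some c), (some a, none)] := by
  obtain ⟨h0, hs, ht⟩ := h
  cases A with
  | nil => simp at hs
  | cons col A =>
    have h0' : ∀ d ∈ A, d ≠ ((none : Option σ), (none : Option σ)) :=
      fun d hd => h0 d (List.mem_cons_of_mem _ hd)
    rcases col with ⟨x, y⟩
    cases x with
    | some a' =>
      cases y with
      | some c' =>
        simp only [List.filterMap_cons] at hs ht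
        obtain ⟨rfl, hs2⟩ := List.cons_eq_cons.1 hs
        obtain ⟨rfl, ht2⟩ := List.cons_eq_cons.1 ht
        have : A = [] := align_nil_nil ⟨h0', hs2, ht2⟩
        left; simp [this]
      | none =>
        simp only [List.filterMap_cons] at hs ht
        obtain ⟨rfl, hs2⟩ := List.cons_eq_cons.1 hs
        have : A = [((none : Option σ), (some c : Option σ))] :=
          align_nil_single ⟨h0', hs2, ht⟩
        right; left; simp [this]
    | none =>
      cases y with
      | none => exact absurd rfl (h0 _ List.mem_cons_self)
      | some c' =>
        simp only [List.filterMap_cons] at hs ht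
        obtain ⟨rfl, ht2⟩ := List.cons_eq_cons.1 ht
        have : A = [((some a : Option σ), (none : Option σ))] :=
          align_single_nil ⟨h0', hs, ht2⟩
        right; right; simp [this]

end Small

section Compose
variable {σ : Type*}

/-- Merge a left symbol and a right symbol into columns of the composite alignment. -/
noncomputable def mergeCol (γ : Scoring σ) : Option σ → Option σ → List (Option σ × Option σ)
  | some a, some c =>
      if γ (some a) (some c) ≤ γ (some a) none + γ none (some c)
      then [(some a, some c)] else [(some a, none), (none, some c)]
  | some a, none => [(some a, none)]
  | none, some c => [(none, some c)]
  | none, none => []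

lemma mergeCol_ne (γ : Scoring σ) (x z : Option σ) :
    ∀ c ∈ mergeCol γ x z, c ≠ ((none : Option σ), (none : Option σ)) := by
  intro d hd
  rcases x with _ | a <;> rcases z with _ | c
  · simp [mergeCol] at hd
  · simp [mergeCol] at hd; subst hd; simp
  · simp [mergeCol] at hd; subst hd; simp
  · simp only [mergeCol] at hd
    split at hd <;> simp at hd
    · subst hd; simp
    · rcases hd with rfl | rfl <;> simp

lemma mergeCol_fst (γ : Scoring σ) (x z : Option σ) :
    (mergeCol γ x z).filterMap Prod.fst = x.toList := by
  rcases x with _ | a <;> rcases z with _ | c <;> simp [mergeCol]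
  split <;> simp [List.filterMap_cons]

lemma mergeCol_snd (γ : Scoring σ) (x z : Option σ) :
    (mergeCol γ x z).filterMap Prod.snd = z.toList := by
  rcases x with _ | a <;> rcases z with _ | c <;> simp [mergeCol]
  split <;> simp [List.filterMap_cons]

def Cond (γ : Scoring σ) : Prop :=
  (∀ a b : σ, γ (some a) none ≤ γ (some a) (some b) + γ (some b) none) ∧
  (∀ a b : σ, γ none (some a) ≤ γ none (some b) + γ (some b) (some a)) ∧
  (∀ a b c : σ,
    min (γ (some a) (some c)) (γ (some a) none + γ none (some c)) ≤
      γ (some a) (some b) + γ (some b) (some c)) ∧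
  (∀ b : σ, 0 ≤ γ (some b) none + γ none (some b))

lemma mergeCol_score (γ : Scoring σ) (hγ : Cond γ) (x z : Option σ) (b : σ) :
    alignScore γ (mergeCol γ x z) ≤ γ x (some b) + γ (some b) z := by
  obtain ⟨h1, h2, h3, h4⟩ := hγ
  rcases x with _ | a <;> rcases z with _ | c
  · simp only [mergeCol, alignScore, List.map_nil, List.sum_nil]
    linarith [h4 b]
  · simpa [mergeCol, alignScore] using h2 c b
  · simpa [mergeCol, alignScore] using h1 a b
  · have := h3 a b c
    rw [min_le_iff] at this
    by_cases hif : γ (some a) (some c) ≤ γ (some a) none + γ none (some c)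
    · simp only [mergeCol, if_pos hif, alignScore, List.map_cons, List.map_nil,
        List.sum_cons, List.sum_nil, add_zero]
      rcases this with h | h
      · exact h
      · exact le_trans hif h
    · simp only [mergeCol, if_neg hif, alignScore, List.map_cons, List.map_nil,
        List.sum_cons, List.sum_nil, add_zero]
      push_neg at hif
      rcases this with h | h
      · linarith
      · linarith

/-- Compose an alignment of `(s,t)` with one of `(t,u)` into one of `(s,u)`. -/
noncomputable def compose (γ : Scoring σ) :
    List (Option σ × Option σ) → List (Option σ × Option σ) → List (Option σ × Option σ)
  | [], B => B
  | (x, none) :: A, B => (x, none) :: compose γ A B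
  | (_, some _) :: _, [] => []
  | (x, some b) :: A, (none, z) :: B => (none, z) :: compose γ ((x, some b) :: A) B
  | (x, some _) :: A, (some _, z) :: B => mergeCol γ x z ++ compose γ A B
  termination_by A B => A.length + B.length

lemma compose_spec (γ : Scoring σ) (hγ : Cond γ) :
    ∀ A B : List (Option σ × Option σ), ∀ s t u : List σ,
      IsAlignment A s t → IsAlignment B t u →
      IsAlignment (compose γ A B) s u ∧
      alignScore γ (compose γ A B) ≤ alignScore γ A + alignScore γ B := by
  intro A B
  induction A, B using compose.induct with
  | case1 B =>
    intro s t u hA hB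
    obtain ⟨hA0, hAs, hAt⟩ := hA
    simp only [List.filterMap_nil] at hAs hAt
    subst hAs; subst hAt
    rw [compose]
    constructor
    · exact hB
    · simp [alignScore]
  | case2 x A B ih =>
    intro s t u hA hB
    obtain ⟨hA0, hAs, hAt⟩ := hA
    have hx : ∃ a, x = some a := by
      rcases x with _ | a
      · exact absurd rfl (hA0 _ List.mem_cons_self)
      · exact ⟨a, rfl⟩
    obtain ⟨a, rfl⟩ := hx
    simp only [List.filterMap_cons] at hAs hAt
    subst hAs
    have hA' : IsAlignment A (List.filterMap Prod.fst A) t :=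
      ⟨fun d hd => hA0 d (List.mem_cons_of_mem _ hd), rfl, hAt⟩
    obtain ⟨hal, hsc⟩ := ih _ t u hA' hB
    rw [compose]
    constructor
    · exact ⟨by
        intro d hd
        rcases List.mem_cons.1 hd with rfl | hd
        · simp
        · exact hal.1 d hd,
      by simp [List.filterMap_cons, hal.2.1], by simp [List.filterMap_cons, hal.2.2]⟩
    · simp only [alignScore_cons] at hsc ⊢
      linarith
  | case3 x b A =>
    intro s t u hA hB
    obtain ⟨hA0, hAs, hAt⟩ := hA
    obtain ⟨hB0, hBt, hBu⟩ := hB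
    simp only [List.filterMap_cons] at hAt
    rw [List.filterMap_nil] at hBt
    rw [← hBt] at hAt
    simp at hAt
  | case4 x b A z B ih =>
    intro s t u hA hB
    obtain ⟨hB0, hBt, hBu⟩ := hB
    have hz : ∃ c, z = some c := by
      rcases z with _ | c
      · exact absurd rfl (hB0 _ List.mem_cons_self)
      · exact ⟨c, rfl⟩
    obtain ⟨c, rfl⟩ := hz
    simp only [List.filterMap_cons] at hBt hBu
    subst hBu
    have hB' : IsAlignment B t (List.filterMap Prod.snd B) :=
      ⟨fun d hd => hB0 d (List.mem_cons_of_mem _ hd), hBt, rfl⟩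
    obtain ⟨hal, hsc⟩ := ih s t _ hA hB'
    rw [compose]
    constructor
    · exact ⟨by
        intro d hd
        rcases List.mem_cons.1 hd with rfl | hd
        · simp
        · exact hal.1 d hd,
      by simp [List.filterMap_cons, hal.2.1], by simp [List.filterMap_cons, hal.2.2]⟩
    · simp only [alignScore_cons] at hsc ⊢
      linarith
  | case5 x b A b' z B ih =>
    intro s t u hA hB
    obtain ⟨hA0, hAs, hAt⟩ := hA
    obtain ⟨hB0, hBt, hBu⟩ := hB
    simp only [List.filterMap_cons] at hAt hBt
    rw [← hAt] at hBt
    obtain ⟨hbb, hBt2⟩ := List.cons_eq_cons.1 hBt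
    subst hbb
    have hA' : IsAlignment A (List.filterMap Prod.fst A) (List.filterMap Prod.snd A) :=
      ⟨fun d hd => hA0 d (List.mem_cons_of_mem _ hd), rfl, rfl⟩
    have hB' : IsAlignment B (List.filterMap Prod.snd A) (List.filterMap Prod.snd B) :=
      ⟨fun d hd => hB0 d (List.mem_cons_of_mem _ hd), hBt2, rfl⟩
    obtain ⟨hal, hsc⟩ := ih _ _ _ hA' hB'
    rw [compose]
    constructor
    · refine ⟨?_, ?_, ?_⟩
      · intro d hd
        rcases List.mem_append.1 hd with hd | hd
        · exact mergeCol_ne γ x z d hd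
        · exact hal.1 d hd
      · rw [List.filterMap_append, mergeCol_fst, hal.2.1, ← hAs]
        rcases x with _ | a <;> simp [List.filterMap_cons]
      · rw [List.filterMap_append, mergeCol_snd, hal.2.2, ← hBu]
        rcases z with _ | cc <;> simp [List.filterMap_cons]
    · simp only [alignScore_append, alignScore_cons]
      have := mergeCol_score γ hγ x z b'
      linarith

end Compose

lemma editDist_le' {σ : Type*} [Fintype σ] (γ : Scoring σ) (A : List (Option σ × Option σ))
    (s t : List σ) (h1 : ∀ c ∈ A, c ≠ ((none : Option σ), (none : Option σ)))
    (h2 : A.filterMap Prod.fst = s) (h3 : A.filterMap Prod.snd = t) :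
    editDist γ s t ≤ alignScore γ A := editDist_le γ ⟨h1, h2, h3⟩

theorem stmt6 {σ : Type*} [Fintype σ] (γ : Scoring σ) :
    (∀ s t u : List σ, editDist γ s u ≤ editDist γ s t + editDist γ t u) ↔
      ((∀ a b : σ, γ (some a) none ≤ γ (some a) (some b) + γ (some b) none) ∧
       (∀ a b : σ, γ none (some a) ≤ γ none (some b) + γ (some b) (some a)) ∧
       (∀ a b c : σ,
         min (γ (some a) (some c)) (γ (some a) none + γ none (some c)) ≤
           γ (some a) (some b) + γ (some b) (some c)) ∧
       (∀ b : σ, 0 ≤ γ (some b) none + γ none (some b))) := by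
  constructor
  · intro H
    refine ⟨?_, ?_, ?_, ?_⟩
    · intro a b
      have h1 : γ (some a) none ≤ editDist γ [a] [] := le_editDist γ (by
        intro A hA; rw [align_single_nil hA]; simp [alignScore])
      have h2 : editDist γ [a] [b] ≤ γ (some a) (some b) := by
        simpa [alignScore] using editDist_le' γ [(some a, some b)] [a] [b] (by simp) (by simp) (by simp)
      have h3 : editDist γ [b] [] ≤ γ (some b) none := by
        simpa [alignScore] using editDist_le' γ [(some b, none)] [b] [] (by simp) (by simp) (by simp)
      have := H [a] [b] []
      linarith
    · intro a b
      have h1 : γ none (some a) ≤ editDist γ [] [a] := le_editDist γ (by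
        intro A hA; rw [align_nil_single hA]; simp [alignScore])
      have h2 : editDist γ [] [b] ≤ γ none (some b) := by
        simpa [alignScore] using editDist_le' γ [(none, some b)] [] [b] (by simp) (by simp) (by simp)
      have h3 : editDist γ [b] [a] ≤ γ (some b) (some a) := by
        simpa [alignScore] using editDist_le' γ [(some b, some a)] [b] [a] (by simp) (by simp) (by simp)
      have := H [] [b] [a]
      linarith
    · intro a b c
      have h1 : min (γ (some a) (some c)) (γ (some a) none + γ none (some c)) ≤
          editDist γ [a] [c] := le_editDist γ (by
        intro A hA
        rcases align_single_single hA with rfl | rfl | rfl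
        · simpa [alignScore] using min_le_left _ _
        · simpa [alignScore] using min_le_right (γ (some a) (some c)) _
        · have := min_le_right (γ (some a) (some c)) (γ (some a) none + γ none (some c))
          simp only [alignScore, List.map_cons, List.map_nil, List.sum_cons, List.sum_nil,
            add_zero]
          linarith)
      have h2 : editDist γ [a] [b] ≤ γ (some a) (some b) := by
        simpa [alignScore] using editDist_le' γ [(some a, some b)] [a] [b] (by simp) (by simp) (by simp)
      have h3 : editDist γ [b] [c] ≤ γ (some b) (some c) := by
        simpa [alignScore] using editDist_le' γ [(some b, some c)] [b] [c] (by simp) (by simp) (by simp)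
      have := H [a] [b] [c]
      linarith
    · intro b
      have h1 : (0 : ℝ) ≤ editDist γ [] [] := le_editDist γ (by
        intro A hA; rw [align_nil_nil hA]; simp [alignScore])
      have h2 : editDist γ [] [b] ≤ γ none (some b) := by
        simpa [alignScore] using editDist_le' γ [(none, some b)] [] [b] (by simp) (by simp) (by simp)
      have h3 : editDist γ [b] [] ≤ γ (some b) none := by
        simpa [alignScore] using editDist_le' γ [(some b, none)] [b] [] (by simp) (by simp) (by simp)
      have := H [] [b] []
      linarith
  · intro hγ s t u
    have hC : Cond γ := hγ
    have key : editDist γ s u - editDist γ t u ≤ editDist γ s t := by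
      refine le_csInf (scores_nonempty γ s t) ?_
      rintro x ⟨A, hA, rfl⟩
      rw [sub_le_iff_le_add, add_comm]
      rw [← sub_le_iff_le_add]
      refine le_csInf (scores_nonempty γ t u) ?_
      rintro y ⟨B, hB, rfl⟩
      obtain ⟨hal, hs⟩ := compose_spec γ hC A B s t u hA hB
      have := editDist_le γ hal
      linarith
    linarith
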